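/- M − Sᵀ M S is positive semidefinite; equivalently ζᵀ Sᵀ M S ζ ≤ ζᵀ M ζ for every vector ζ. -/

import Mathlib

open Matrix

theorem M_sub_projected_inertia_posSemidef {n : ℕ}
    (M P : Matrix (Fin n) (Fin n) ℝ) (hM : M.PosDef)
    (hP : P * P = P) (hPt : Pᵀ = P) (ν : ℝ) (hν : 0 < ν)
    (Mc S : Matrix (Fin n) (Fin n) ℝ)
    (hMc : Mc = P * M * P + ν • (1 - P)) (hS : S = 1 - Mc⁻¹ * P * M) :
    (M - Sᵀ * M * S).PosSemidef ∧
      ∀ ζ : Fin n → ℝ, ζ ⬝ᵥ ((Sᵀ * M * S) *ᵥ ζ) ≤ ζ ⬝ᵥ (M *ᵥ ζ) := by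
  have hMt : Mᵀ = M := hM.isHermitian
  have symdot : ∀ (A : Matrix (Fin n) (Fin n) ℝ), Aᵀ = A → ∀ y z : Fin n → ℝ,
      y ⬝ᵥ (A *ᵥ z) = (A *ᵥ y) ⬝ᵥ z := by
    intro A hA y z
    rw [Matrix.dotProduct_mulVec]
    conv_lhs => rw [← hA]
    rw [Matrix.vecMul_transpose]
  -- Mc is symmetric
  have hMcsym : Mcᵀ = Mc := by
    subst hMc
    simp [Matrix.transpose_add, Matrix.transpose_mul, Matrix.transpose_smul, hPt, hMt,
      Matrix.mul_assoc]
  -- Mc is positive definite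
  have hMcPD : Mc.PosDef := by
    rw [Matrix.posDef_iff_dotProduct_mulVec]
    constructor
    · simpa [Matrix.IsHermitian] using hMcsym
    · intro x hx
      have hxP : ∀ y : Fin n → ℝ, y ⬝ᵥ ((P * M * P) *ᵥ y) = (P *ᵥ y) ⬝ᵥ (M *ᵥ (P *ᵥ y)) := by
        intro y
        rw [← Matrix.mulVec_mulVec, ← Matrix.mulVec_mulVec, symdot P hPt]
      have hQt : (1 - P)ᵀ = 1 - P := by simp [Matrix.transpose_sub, hPt]
      have hQ2 : (1 - P) * (1 - P) = 1 - P := by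
        simp [Matrix.mul_sub, Matrix.sub_mul, hP]
      have hxQ : ∀ y : Fin n → ℝ, y ⬝ᵥ ((1 - P) *ᵥ y) = ((1 - P) *ᵥ y) ⬝ᵥ ((1 - P) *ᵥ y) := by
        intro y
        conv_lhs => rw [← hQ2, ← Matrix.mulVec_mulVec, symdot _ hQt]
      have hMcx : star x ⬝ᵥ (Mc *ᵥ x)
          = (P *ᵥ x) ⬝ᵥ (M *ᵥ (P *ᵥ x)) + ν * (((1 - P) *ᵥ x) ⬝ᵥ ((1 - P) *ᵥ x)) := by
        subst hMc
        simp only [Matrix.add_mulVec, Matrix.smul_mulVec, dotProduct_add,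
          dotProduct_smul, star_trivial, smul_eq_mul]
        rw [hxP, hxQ]
      rw [hMcx]
      by_cases hPx : P *ᵥ x = 0
      · have hQx : (1 - P) *ᵥ x = x := by
          simp [Matrix.sub_mulVec, hPx]
        rw [hPx, hQx]
        simp only [Matrix.mulVec_zero, dotProduct_zero, zero_add]
        have hnn : (0:ℝ) ≤ x ⬝ᵥ x := Finset.sum_nonneg fun i _ => mul_self_nonneg _
        have : (0:ℝ) < x ⬝ᵥ x := by
          rcases hnn.lt_or_eq with h | h
          · exact h
          · exact absurd (dotProduct_self_eq_zero.mp h.symm) hx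
        positivity
      · have h1 : 0 < (P *ᵥ x) ⬝ᵥ (M *ᵥ (P *ᵥ x)) := by
          simpa using hM.dotProduct_mulVec_pos hPx
        have h2 : 0 ≤ ((1 - P) *ᵥ x) ⬝ᵥ ((1 - P) *ᵥ x) :=
          Finset.sum_nonneg fun i _ => mul_self_nonneg _
        nlinarith
  have hdet : IsUnit Mc.det := isUnit_iff_ne_zero.mpr hMcPD.det_pos.ne'
  have hMcinv : Mc⁻¹ * Mc = 1 := Matrix.nonsing_inv_mul _ hdet
  have hMcinv' : Mc * Mc⁻¹ = 1 := Matrix.mul_nonsing_inv _ hdet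
  set N := Mc⁻¹ with hN
  have hNt : Nᵀ = N := by rw [hN, Matrix.transpose_nonsing_inv, hMcsym]
  -- Mc commutes with P
  have hMcP : Mc * P = P * M * P := by
    subst hMc
    simp [Matrix.add_mul, Matrix.sub_mul, Matrix.smul_mul, Matrix.mul_assoc, hP]
  have hPMc : P * Mc = P * M * P := by
    subst hMc
    simp [Matrix.mul_add, Matrix.mul_sub, Matrix.mul_smul, ← Matrix.mul_assoc, hP]
  have hcomm : N * P = P * N := by
    calc N * P = N * P * (Mc * N) := by rw [hMcinv', Matrix.mul_one]
      _ = N * (P * Mc) * N := by simp only [Matrix.mul_assoc]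
      _ = N * (Mc * P) * N := by rw [hPMc, hMcP]
      _ = (N * Mc) * (P * N) := by simp only [Matrix.mul_assoc]
      _ = P * N := by rw [hMcinv, Matrix.one_mul]
  obtain ⟨T, hT⟩ : ∃ T, T = P * N * P := ⟨_, rfl⟩
  have hT1 : N * P = T := by
    rw [hT]
    conv_lhs => rw [← hP, ← Matrix.mul_assoc, hcomm]
  have hT2 : P * N = T := by rw [← hcomm, hT1]
  have hT3 : T * M * T = T := by
    rw [hT]
    calc P * N * P * M * (P * N * P)
        = P * N * (P * M * P) * (N * P) := by simp only [Matrix.mul_assoc]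
      _ = P * N * (Mc * P) * (N * P) := by rw [hMcP]
      _ = P * (N * Mc) * (P * (N * P)) := by simp only [Matrix.mul_assoc]
      _ = P * (P * (N * P)) := by rw [hMcinv, Matrix.mul_one]
      _ = P * N * P := by
          simp only [← Matrix.mul_assoc]
          rw [hP]
  -- Key identity : M - Sᵀ M S = (P M)ᵀ N (P M)
  have hkey : M - Sᵀ * M * S = (P * M)ᵀ * N * (P * M) := by
    subst hS
    have hSt : (1 - N * P * M)ᵀ = 1 - M * P * N := by
      simp [Matrix.transpose_sub, Matrix.transpose_mul, hMt, hPt, hNt, Matrix.mul_assoc]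
    rw [hSt]
    have l1 : (1 : Matrix (Fin n) (Fin n) ℝ) - M * P * N = 1 - M * T := by
      rw [Matrix.mul_assoc, hT2]
    have l2 : (1 : Matrix (Fin n) (Fin n) ℝ) - N * P * M = 1 - T * M := by rw [hT1]
    have l3 : (P * M)ᵀ * N * (P * M) = M * T * M := by
      rw [Matrix.transpose_mul, hMt, hPt, hT]
      simp only [Matrix.mul_assoc]
    rw [l1, l2, l3]
    have expand : (1 - M * T) * M * (1 - T * M)
        = M - M * T * M - M * T * M + M * (T * M * T) * M := by noncomm_ring
    rw [expand, hT3]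
    abel
  have hPSD : (M - Sᵀ * M * S).PosSemidef := by
    rw [hkey]
    have hNPD : N.PosDef := hMcPD.inv
    have := hNPD.posSemidef.conjTranspose_mul_mul_same (P * M)
    simpa using this
  refine ⟨hPSD, fun ζ => ?_⟩
  have h := hPSD.dotProduct_mulVec_nonneg ζ
  simp only [star_trivial, Matrix.sub_mulVec, dotProduct_sub] at h
  linarith
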